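/- For every natural number n ≥ 3 and every complete first-order theory T, if T has the property SOP_{n+1} then T has the property SOP_n. -/

import Mathlib

open FirstOrder FirstOrder.Language

universe u v

/-- A first-order theory `T` has the `n`-strong order property `SOP_n` if there are a formula
`φ(x̄,ȳ)` (with `lg x̄ = lg ȳ = m`), a model `M` of `T` and tuples `ā_k` (`k < ω`) from `M` such
that `M ⊨ φ[ā_k, ā_l]` for all `k < l < ω`, while `M` satisfies the negation of
`∃ x̄_0 … x̄_{n-1} ⋀ {φ(x̄_l, x̄_k) : k = l + 1 mod n}`. -/
def SOP {L : FirstOrder.Language.{u, v}} (n : ℕ) (T : L.Theory) : Prop :=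
  ∃ (m : ℕ) (φ : L.Formula (Fin m ⊕ Fin m)) (M : Theory.ModelType.{u, v, max u v} T)
    (a : ℕ → Fin m → M),
    (∀ k l : ℕ, k < l → φ.Realize (Sum.elim (a k) (a l))) ∧
    ¬ ∃ b : ℕ → Fin m → M, ∀ l < n, φ.Realize (Sum.elim (b l) (b ((l + 1) % n)))

/-- For every `n ≥ 3` and every complete first-order theory `T`,
if `T` has `SOP_{n+1}` then `T` has `SOP_n`. -/
theorem sop_succ_implies_sop {L : FirstOrder.Language.{u, v}} (T : L.Theory) (hT : T.IsComplete)
    (n : ℕ) (hn : 3 ≤ n) (h : SOP (n + 1) T) : SOP n T := by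
  classical
  obtain ⟨m, φ, M, a, ha, hcyc⟩ := h
  set e : Fin m ⊕ Fin m ≃ Fin (m + m) := finSumFinEquiv with he
  -- ψ(x x', y y') := φ(x, x') ∧ φ(x', y) ∧ φ(x, y)
  set g₁ : Fin m ⊕ Fin m → Fin (m + m) ⊕ Fin (m + m) := fun p => Sum.inl (e p) with hg₁
  set g₂ : Fin m ⊕ Fin m → Fin (m + m) ⊕ Fin (m + m) :=
    Sum.elim (fun i => Sum.inl (e (Sum.inr i))) (fun i => Sum.inr (e (Sum.inl i))) with hg₂
  set g₃ : Fin m ⊕ Fin m → Fin (m + m) ⊕ Fin (m + m) :=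
    Sum.elim (fun i => Sum.inl (e (Sum.inl i))) (fun i => Sum.inr (e (Sum.inl i))) with hg₃
  refine ⟨m + m, (φ.relabel g₁) ⊓ (φ.relabel g₂) ⊓ (φ.relabel g₃), M,
    fun k => Sum.elim (a (2 * k)) (a (2 * k + 1)) ∘ e.symm, ?_, ?_⟩
  · intro k l hkl
    simp only [Formula.realize_inf, Formula.realize_relabel]
    refine ⟨⟨?_, ?_⟩, ?_⟩
    · have : (Sum.elim (Sum.elim (a (2 * k)) (a (2 * k + 1)) ∘ e.symm)
          (Sum.elim (a (2 * l)) (a (2 * l + 1)) ∘ e.symm) ∘ g₁)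
          = Sum.elim (a (2 * k)) (a (2 * k + 1)) := by
        funext p; cases p <;> simp [hg₁]
      rw [this]
      exact ha _ _ (by omega)
    · have : (Sum.elim (Sum.elim (a (2 * k)) (a (2 * k + 1)) ∘ e.symm)
          (Sum.elim (a (2 * l)) (a (2 * l + 1)) ∘ e.symm) ∘ g₂)
          = Sum.elim (a (2 * k + 1)) (a (2 * l)) := by
        funext p; cases p <;> simp [hg₂]
      rw [this]
      exact ha _ _ (by omega)
    · have : (Sum.elim (Sum.elim (a (2 * k)) (a (2 * k + 1)) ∘ e.symm)
          (Sum.elim (a (2 * l)) (a (2 * l + 1)) ∘ e.symm) ∘ g₃)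
          = Sum.elim (a (2 * k)) (a (2 * l)) := by
        funext p; cases p <;> simp [hg₃]
      rw [this]
      exact ha _ _ (by omega)
  · rintro ⟨b, hb⟩
    apply hcyc
    -- components of the pairs
    set c₀ : ℕ → Fin m → M := fun l i => b l (e (Sum.inl i)) with hc₀
    set c₁ : ℕ → Fin m → M := fun l i => b l (e (Sum.inr i)) with hc₁
    have H : ∀ l < n, φ.Realize (Sum.elim (c₀ l) (c₁ l)) ∧
        φ.Realize (Sum.elim (c₁ l) (c₀ ((l + 1) % n))) ∧
        φ.Realize (Sum.elim (c₀ l) (c₀ ((l + 1) % n))) := by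
      intro l hl
      have hbl := hb l hl
      simp only [Formula.realize_inf, Formula.realize_relabel] at hbl
      obtain ⟨⟨h1, h2⟩, h3⟩ := hbl
      refine ⟨?_, ?_, ?_⟩
      · have heq : Sum.elim (c₀ l) (c₁ l)
            = (Sum.elim (b l) (b ((l + 1) % n)) ∘ g₁) := by
          funext p; cases p <;> simp [hg₁, hc₀, hc₁]
        rwa [heq]
      · have heq : Sum.elim (c₁ l) (c₀ ((l + 1) % n))
            = (Sum.elim (b l) (b ((l + 1) % n)) ∘ g₂) := by
          funext p; cases p <;> simp [hg₂, hc₀, hc₁]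
        rwa [heq]
      · have heq : Sum.elim (c₀ l) (c₀ ((l + 1) % n))
            = (Sum.elim (b l) (b ((l + 1) % n)) ∘ g₃) := by
          funext p; cases p <;> simp [hg₃, hc₀, hc₁]
        rwa [heq]
    -- the (n+1)-cycle for φ : c₀ 0, c₁ 0, c₀ 1, c₀ 2, …, c₀ (n-1)
    set d : ℕ → Fin m → M :=
      fun j => if j = 0 then c₀ 0 else if j = 1 then c₁ 0 else c₀ (j - 1) with hd
    refine ⟨d, ?_⟩
    intro l hl
    rcases Nat.lt_or_ge l 2 with h2 | h2
    · interval_cases l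
      · -- edge c₀ 0 → c₁ 0
        have h01 : (0 + 1) % (n + 1) = 1 := Nat.mod_eq_of_lt (by omega)
        rw [h01]
        have hd0 : d 0 = c₀ 0 := by simp [hd]
        have hd1 : d 1 = c₁ 0 := by simp [hd]
        rw [hd0, hd1]
        exact (H 0 (by omega)).1
      · -- edge c₁ 0 → c₀ 1
        have hH := (H 0 (by omega)).2.1
        have h1n : (0 + 1) % n = 1 := Nat.mod_eq_of_lt (by omega)
        rw [h1n] at hH
        have h12 : (1 + 1) % (n + 1) = 2 := Nat.mod_eq_of_lt (by omega)
        rw [h12]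
        have hd1 : d 1 = c₁ 0 := by simp [hd]
        have hd2 : d 2 = c₀ 1 := by simp [hd]
        rw [hd1, hd2]
        exact hH
    · -- edge c₀ (l-1) → c₀ l (or → c₀ 0 when l = n)
      rcases Nat.lt_or_ge l n with hln | hln
      · have hH := (H (l - 1) (by omega)).2.2
        have hmod : (l - 1 + 1) % n = l := by
          rw [Nat.sub_add_cancel (by omega)]; exact Nat.mod_eq_of_lt hln
        rw [hmod] at hH
        have hmod2 : (l + 1) % (n + 1) = l + 1 := Nat.mod_eq_of_lt (by omega)
        rw [hmod2]
        have hdl : d l = c₀ (l - 1) := by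
          simp [hd, show l ≠ 0 by omega, show l ≠ 1 by omega]
        have hdl1 : d (l + 1) = c₀ l := by
          simp [hd, show l + 1 ≠ 0 by omega, show l + 1 ≠ 1 by omega, show l ≠ 0 by omega]
        rw [hdl, hdl1]
        exact hH
      · have hln' : l = n := by omega
        have hH := (H (n - 1) (by omega)).2.2
        have hmod : (n - 1 + 1) % n = 0 := by
          rw [Nat.sub_add_cancel (by omega)]; exact Nat.mod_self n
        rw [hmod] at hH
        have hmod2 : (l + 1) % (n + 1) = 0 := by rw [hln']; exact Nat.mod_self (n + 1)
        rw [hmod2, hln']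
        have hdn : d n = c₀ (n - 1) := by
          simp [hd, show n ≠ 0 by omega, show n ≠ 1 by omega]
        have hd0 : d 0 = c₀ 0 := by simp [hd]
        rw [hdn, hd0]
        exact hH
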